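/- arXiv:2202.13370 — 2 statements merged into one kernel-verified Lean document; each statement's English description precedes it below -/
import Mathlib

section
/- For homothety classes [U₁],[U₂] ∈ L⁰(V_r), the following are equivalent: (1) dist([U₁],[U₂]) = 2r; (2) both U₁ and U₂ lie in the boundary ∂L(V_r) (for boundary representatives Ũᵢ = Uᵢ), and neither π^{r-1}U₁ nor π^{r-1}U₂ is contained in U₁ ∩ U₂. -/
open Pointwise

namespace SphericalSubmoduleCodes

variable {R : Type*} [CommRing R] {V : Type*} [AddCommGroup V] [Module R V]

/-- `nmin π U₁ U₂ = min {m ≥ 0 : π^m U₁ ⊆ U₂}`. -/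
noncomputable def nmin (π : R) (U₁ U₂ : Submodule R V) : ℕ :=
  sInf {m : ℕ | (π ^ m) • U₁ ≤ U₂}

/-- The distance `dist(U₁,U₂) = min{m : π^m U₁ ⊆ U₂} + min{n : π^n U₂ ⊆ U₁}`
(used for boundary submodules, where `Ũ = U`). -/
noncomputable def distMod (π : R) (U₁ U₂ : Submodule R V) : ℕ :=
  nmin π U₁ U₂ + nmin π U₂ U₁

/-- `m_U = max {0 ≤ m ≤ r : U ⊆ π^m V}`. -/
noncomputable def mExp (π : R) (r : ℕ) (U : Submodule R V) : ℕ :=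
  sSup {m : ℕ | m ≤ r ∧ U ≤ (π ^ m) • (⊤ : Submodule R V)}

/-- `Ũ`, the unique maximal submodule with `π^{m_U} Ũ = U`: the kernel of
`x ↦ π^{m_U} x + U`. -/
noncomputable def tilde (π : R) (r : ℕ) (U : Submodule R V) : Submodule R V :=
  U.comap ((π ^ mExp π r U) • (LinearMap.id : V →ₗ[R] V))

/-- The boundary `∂L(V_r) = {U : π^{r-1} V ⊄ U and U ⊄ π V}`. -/
def boundary (π : R) (r : ℕ) : Set (Submodule R V) :=
  {U | ¬ ((π ^ (r - 1)) • (⊤ : Submodule R V) ≤ U) ∧ ¬ (U ≤ π • (⊤ : Submodule R V))}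

/-- The minimum distance of a code of (boundary) submodules. -/
noncomputable def minDist (π : R) (C : Set (Submodule R V)) : ℕ :=
  sInf {n : ℕ | ∃ U₁ ∈ C, ∃ U₂ ∈ C, U₁ ≠ U₂ ∧ distMod π U₁ U₂ = n}

/-- homothety: `U ∼ U' ↔ Ũ = Ũ'`. -/
noncomputable def homSetoid (π : R) (r : ℕ) : Setoid (Submodule R V) :=
  Setoid.ker (tilde π r)

/-- The distance on homothety classes. -/
noncomputable def distClass (π : R) (r : ℕ) :
    Quotient (homSetoid (V := V) π r) → Quotient (homSetoid (V := V) π r) → ℕ :=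
  Quotient.lift₂
    (fun U₁ U₂ => nmin π (tilde π r U₁) (tilde π r U₂) + nmin π (tilde π r U₂) (tilde π r U₁))
    (by
      intro a₁ b₁ a₂ b₂ h₁ h₂
      have ha : tilde π r a₁ = tilde π r a₂ := h₁
      have hb : tilde π r b₁ = tilde π r b₂ := h₂
      simp only [ha, hb])

/-- The Grassmannian: free rank-`n` submodules. -/
def Grass (R : Type*) [CommRing R] {V : Type*} [AddCommGroup V] [Module R V]
    (n : ℕ) : Set (Submodule R V) :=
  {U | Module.Free R U ∧ Module.finrank R U = n}

/-- `binom(a,b)_X = ∏_{i=0}^{b-1} (1 - X^{a-i})/(1 - X^{b-i})`. -/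
def qbinom (X : ℚ) (a b : ℕ) : ℚ :=
  ∏ i ∈ Finset.range b, (1 - X ^ (a - i)) / (1 - X ^ (b - i))

end SphericalSubmoduleCodes

namespace SphericalSubmoduleCodes

section Aux
variable {R : Type*} [CommRing R] {V : Type*} [AddCommGroup V] [Module R V]

lemma aux_mem (a : R) (S : Submodule R V) (x : V) :
    x ∈ a • S ↔ ∃ y ∈ S, a • y = x := by
  rw [← SetLike.mem_coe, Submodule.coe_pointwise_smul, Set.mem_smul_set]; simp

lemma aux_smul_le_self (a : R) (W : Submodule R V) : a • W ≤ W := by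
  intro x hx
  rw [aux_mem _ _ _] at hx
  obtain ⟨y, hy, rfl⟩ := hx
  exact W.smul_mem a hy

lemma aux_pow_smul_anti {a : R} {m n : ℕ} (h : m ≤ n) (W : Submodule R V) :
    a ^ n • W ≤ a ^ m • W := by
  intro x hx
  rw [aux_mem _ _ _] at hx ⊢
  obtain ⟨y, hy, rfl⟩ := hx
  refine ⟨a ^ (n - m) • y, W.smul_mem _ hy, ?_⟩
  rw [smul_smul, ← pow_add]
  congr 2
  omega

lemma aux_smul_mono (a : R) {W W' : Submodule R V} (h : W ≤ W') : a • W ≤ a • W' := by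
  intro x hx
  rw [aux_mem _ _ _] at hx ⊢
  obtain ⟨y, hy, rfl⟩ := hx
  exact ⟨y, h hy, rfl⟩

lemma aux_zero_pow_smul_le {π : R} {r : ℕ} (hπr : π ^ r = 0) (W W' : Submodule R V) :
    π ^ r • W ≤ W' := by
  intro x hx
  rw [aux_mem _ _ _] at hx
  obtain ⟨y, _, rfl⟩ := hx
  rw [hπr, zero_smul]
  exact W'.zero_mem

lemma aux_nmin_le {π : R} {r : ℕ} (hπr : π ^ r = 0) (W W' : Submodule R V) :
    nmin π W W' ≤ r :=
  Nat.sInf_le (aux_zero_pow_smul_le hπr W W')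

lemma aux_nmin_eq_iff {π : R} {r : ℕ} (hr : 1 ≤ r) (hπr : π ^ r = 0)
    (W W' : Submodule R V) :
    nmin π W W' = r ↔ ¬ (π ^ (r - 1)) • W ≤ W' := by
  constructor
  · intro h hc
    have : nmin π W W' ≤ r - 1 := Nat.sInf_le hc
    omega
  · intro hc
    have hmem : r ∈ {m : ℕ | (π ^ m) • W ≤ W'} := aux_zero_pow_smul_le hπr W W'
    have h1 : nmin π W W' ≤ r := Nat.sInf_le hmem
    have h2 : nmin π W W' ∈ {m : ℕ | (π ^ m) • W ≤ W'} := Nat.sInf_mem ⟨r, hmem⟩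
    by_contra hne
    have hlt : nmin π W W' ≤ r - 1 := by omega
    exact hc (le_trans (aux_pow_smul_anti hlt W) h2)

end Aux

/-- For homothety classes `[U₁], [U₂] ∈ L⁰(V_r)` (with maximal representatives
`Ũ₁, Ũ₂`): `dist([U₁],[U₂]) = 2r` iff both representatives lie in the boundary
`∂L(V_r)` and neither `π^{r-1} Ũ₁` nor `π^{r-1} Ũ₂` is contained in `Ũ₁ ∩ Ũ₂`. -/
theorem dist_eq_two_r_iff
    {R : Type*} [CommRing R] [Fintype R] [IsLocalRing R]
    {V : Type*} [AddCommGroup V] [Module R V]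
    (d r : ℕ) (hd : 2 ≤ d) (hr : 1 ≤ r) (b : Module.Basis (Fin d) R V)
    (π : R) (hmax : IsLocalRing.maximalIdeal R = Ideal.span {π})
    (hπr : π ^ r = 0) (hπr' : π ^ (r - 1) ≠ 0)
    (U₁ U₂ : Submodule R V) :
    distMod π (tilde π r U₁) (tilde π r U₂) = 2 * r ↔
      (tilde π r U₁ ∈ boundary π r ∧ tilde π r U₂ ∈ boundary π r ∧
        ¬ ((π ^ (r - 1)) • tilde π r U₁ ≤ tilde π r U₁ ⊓ tilde π r U₂) ∧
        ¬ ((π ^ (r - 1)) • tilde π r U₂ ≤ tilde π r U₁ ⊓ tilde π r U₂)) := by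
  set W₁ := tilde π r U₁
  set W₂ := tilde π r U₂
  have hle₁ : nmin π W₁ W₂ ≤ r := aux_nmin_le hπr _ _
  have hle₂ : nmin π W₂ W₁ ≤ r := aux_nmin_le hπr _ _
  have key : distMod π W₁ W₂ = 2 * r ↔
      ¬ (π ^ (r - 1)) • W₁ ≤ W₂ ∧ ¬ (π ^ (r - 1)) • W₂ ≤ W₁ := by
    rw [← aux_nmin_eq_iff hr hπr W₁ W₂, ← aux_nmin_eq_iff hr hπr W₂ W₁]
    unfold distMod
    omega
  rw [key]
  have hinf₁ : ((π ^ (r - 1)) • W₁ ≤ W₁ ⊓ W₂) ↔ (π ^ (r - 1)) • W₁ ≤ W₂ := by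
    rw [le_inf_iff]
    exact ⟨fun h => h.2, fun h => ⟨aux_smul_le_self _ _, h⟩⟩
  have hinf₂ : ((π ^ (r - 1)) • W₂ ≤ W₁ ⊓ W₂) ↔ (π ^ (r - 1)) • W₂ ≤ W₁ := by
    rw [le_inf_iff]
    exact ⟨fun h => h.1, fun h => ⟨h, aux_smul_le_self _ _⟩⟩
  have hbot : ∀ (W W' : Submodule R V), W ≤ π • (⊤ : Submodule R V) →
      (π ^ (r - 1)) • W ≤ W' := by
    intro W W' hW x hx
    rw [aux_mem _ _ _] at hx
    obtain ⟨y, hy, rfl⟩ := hx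
    obtain ⟨z, -, rfl⟩ := (aux_mem _ _ _).mp (hW hy)
    have : (π ^ (r - 1)) • π • z = (0 : V) := by
      rw [smul_smul, ← pow_succ]
      have : r - 1 + 1 = r := by omega
      rw [this, hπr, zero_smul]
    rw [this]
    exact W'.zero_mem
  constructor
  · rintro ⟨h₁, h₂⟩
    refine ⟨⟨?_, ?_⟩, ⟨?_, ?_⟩, hinf₁.not.mpr h₁, hinf₂.not.mpr h₂⟩
    · exact fun hc => h₂ (le_trans (aux_smul_mono _ le_top) hc)
    · exact fun hc => h₁ (hbot _ _ hc)
    · exact fun hc => h₁ (le_trans (aux_smul_mono _ le_top) hc)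
    · exact fun hc => h₂ (hbot _ _ hc)
  · rintro ⟨_, _, h₁, h₂⟩
    exact ⟨hinf₁.not.mp h₁, hinf₂.not.mp h₂⟩

end SphericalSubmoduleCodes
end

section
/- For each n ∈ {1,…,d−1}, the set F_r^n = {U_δ : δ ∈ Sym(d)·(r,…,r,0,…,0)} (with n trailing zeros, i.e. all submodules spanned by π^r-scaled and unscaled basis vectors with exactly n unscaled ones) is a spherical code in V_r of minimum distance 2r and cardinality d!/(n!(d−n)!). -/
open Pointwise

namespace SphericalSubmoduleCodes

/-- `U_δ = Rπ^{δ₁}e₁ ⊕ … ⊕ Rπ^{δ_d}e_d`. -/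
noncomputable def Udelta {R : Type*} [CommRing R] {V : Type*} [AddCommGroup V] [Module R V]
    {d : ℕ} (π : R) (b : Module.Basis (Fin d) R V) (δ : Fin d → ℕ) : Submodule R V :=
  ⨆ i : Fin d, Submodule.span R {(π ^ δ i) • b i}

/-- The `𝐞`-permutation code `{[U_δ] : δ ∈ Sym(d)·ε}`. -/
noncomputable def permCode {R : Type*} [CommRing R] {V : Type*} [AddCommGroup V] [Module R V]
    {d : ℕ} (π : R) (b : Module.Basis (Fin d) R V) (ε : Fin d → ℕ) : Set (Submodule R V) :=
  {U | ∃ σ : Equiv.Perm (Fin d), U = Udelta π b (ε ∘ σ)}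

end SphericalSubmoduleCodes

namespace SphericalSubmoduleCodes

section Aux

variable {R : Type*} [CommRing R] {V : Type*} [AddCommGroup V] [Module R V]

lemma pw_smul_le_iff (a : R) (S T : Submodule R V) :
    a • S ≤ T ↔ ∀ x ∈ S, a • x ∈ T := by
  constructor
  · intro h x hx
    exact h (Submodule.smul_mem_pointwise_smul x a S hx)
  · intro h x hx
    rw [← SetLike.mem_coe, Submodule.coe_pointwise_smul] at hx
    obtain ⟨y, hy, rfl⟩ := hx
    exact h y hy

lemma Udelta_eq_span {d : ℕ} (π : R) (b : Module.Basis (Fin d) R V) (δ : Fin d → ℕ) (r : ℕ)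
    (hδ : ∀ i, δ i = 0 ∨ δ i = r) (hπr : π ^ r = 0) :
    Udelta π b δ = Submodule.span R (b '' {i | δ i = 0}) := by
  apply le_antisymm
  · rw [Udelta, iSup_le_iff]
    intro i
    rw [Submodule.span_le, Set.singleton_subset_iff]
    rcases eq_or_ne (δ i) 0 with h0 | h0
    · rw [h0, pow_zero, one_smul]
      exact Submodule.subset_span ⟨i, h0, rfl⟩
    · have h : δ i = r := (hδ i).resolve_left h0
      rw [h, hπr, zero_smul]
      exact Submodule.zero_mem _
  · rw [Submodule.span_le]
    rintro x ⟨i, hi, rfl⟩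
    have hb : b i = π ^ δ i • b i := by
      rw [Set.mem_setOf_eq] at hi
      rw [hi, pow_zero, one_smul]
    rw [hb]
    exact Submodule.mem_iSup_of_mem i (Submodule.subset_span rfl)

lemma nmin_span_eq {d : ℕ} (π : R) (b : Module.Basis (Fin d) R V) (r : ℕ)
    (hpow : ∀ m, π ^ m = 0 ↔ r ≤ m) (s t : Set (Fin d)) {j : Fin d}
    (hjs : j ∈ s) (hjt : j ∉ t) :
    nmin π (Submodule.span R (b '' s)) (Submodule.span R (b '' t)) = r := by
  have hrmem : (π ^ r) • Submodule.span R (b '' s) ≤ Submodule.span R (b '' t) := by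
    rw [pw_smul_le_iff]
    intro x hx
    rw [(hpow r).mpr le_rfl, zero_smul]
    exact Submodule.zero_mem _
  have hlb : ∀ m ∈ {m : ℕ | (π ^ m) • Submodule.span R (b '' s) ≤ Submodule.span R (b '' t)},
      r ≤ m := by
    intro m hm
    rw [Set.mem_setOf_eq, pw_smul_le_iff] at hm
    have hbj := hm (b j) (Submodule.subset_span ⟨j, hjs, rfl⟩)
    rw [Module.Basis.mem_span_image] at hbj
    rw [← hpow]
    by_contra hne
    have hsupp : (b.repr (π ^ m • b j)).support = {j} := by
      rw [map_smul, Module.Basis.repr_self, Finsupp.smul_single, smul_eq_mul, mul_one,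
        Finsupp.support_single_ne_zero _ hne]
    rw [hsupp] at hbj
    exact hjt (hbj (Finset.mem_singleton_self j))
  exact le_antisymm (Nat.sInf_le hrmem) (hlb _ (Nat.sInf_mem ⟨r, hrmem⟩))

end Aux

/-- For `1 ≤ n ≤ d-1`, the set `F_r^n` of submodules `U_δ` with `δ` a permutation of
the vector with `d-n` entries `r` and `n` entries `0` is a spherical code in `V_r` of
minimum distance `2r` and cardinality `d!/(n!(d-n)!)`. -/
theorem free_permCode_props
    {R : Type*} [CommRing R] [Fintype R] [IsLocalRing R]
    {V : Type*} [AddCommGroup V] [Module R V]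
    (d r : ℕ) (hd : 2 ≤ d) (hr : 1 ≤ r) (b : Module.Basis (Fin d) R V)
    (π : R) (hmax : IsLocalRing.maximalIdeal R = Ideal.span {π})
    (hπr : π ^ r = 0) (hπr' : π ^ (r - 1) ≠ 0)
    (n : ℕ) (hn : 1 ≤ n) (hnd : n ≤ d - 1)
    (F : Set (Submodule R V))
    (hF : F = {U | ∃ δ : Fin d → ℕ, (∀ i, δ i = 0 ∨ δ i = r) ∧
      (Finset.univ.filter (fun i : Fin d => δ i = 0)).card = n ∧ U = Udelta π b δ}) :
    F ⊆ boundary π r ∧ F.Nontrivial ∧ minDist π F = 2 * r ∧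
      Nat.card F = d.factorial / (n.factorial * (d - n).factorial) := by
  have hnR : Nontrivial R := nontrivial_of_ne _ _ hπr'
  have hr0 : r ≠ 0 := by omega
  have hnd' : n ≤ d := by omega
  have hpow : ∀ m, π ^ m = 0 ↔ r ≤ m := by
    intro m
    constructor
    · intro h
      by_contra hlt
      push_neg at hlt
      apply hπr'
      have he : r - 1 = m + (r - 1 - m) := by omega
      rw [he, pow_add, h, zero_mul]
    · intro h
      have he : m = r + (m - r) := by omega
      rw [he, pow_add, hπr, zero_mul]
  -- description of F via finsets
  have hFdesc : ∀ U ∈ F, ∃ s : Finset (Fin d), s.card = n ∧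
      U = Submodule.span R (b '' ↑s) := by
    intro U hU
    rw [hF] at hU
    obtain ⟨δ, hδ, hc, rfl⟩ := hU
    refine ⟨Finset.univ.filter (fun i => δ i = 0), hc, ?_⟩
    rw [Udelta_eq_span π b δ r hδ hπr]
    have hset : {i : Fin d | δ i = 0} = ↑(Finset.univ.filter (fun i => δ i = 0)) := by
      ext i; simp
    rw [hset]
  have hmemF : ∀ s : Finset (Fin d), s.card = n → Submodule.span R (b '' ↑s) ∈ F := by
    intro s hs
    rw [hF]
    refine ⟨fun i => if i ∈ s then 0 else r, fun i => by by_cases h : i ∈ s <;> simp [h], ?_, ?_⟩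
    · rw [← hs]
      congr 1
      ext i
      by_cases h : i ∈ s <;> simp [h, hr0]
    · rw [Udelta_eq_span π b _ r (fun i => by by_cases h : i ∈ s <;> simp [h]) hπr]
      have hset : {i : Fin d | (if i ∈ s then 0 else r) = 0} = ↑s := by
        ext i; by_cases h : i ∈ s <;> simp [h, hr0]
      rw [hset]
  have hspan_inj : Function.Injective
      (fun s : Finset (Fin d) => Submodule.span R (b '' ↑s)) := by
    intro s t h
    simp only at h
    ext i
    constructor <;> intro hi
    · have h1 : b i ∈ Submodule.span R (b '' ↑t) :=
        h ▸ b.self_mem_span_image.mpr (Finset.mem_coe.mpr hi)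
      exact Finset.mem_coe.mp (b.self_mem_span_image.mp h1)
    · have h1 : b i ∈ Submodule.span R (b '' ↑s) :=
        h ▸ b.self_mem_span_image.mpr (Finset.mem_coe.mpr hi)
      exact Finset.mem_coe.mp (b.self_mem_span_image.mp h1)
  -- boundary
  have hbdry : F ⊆ boundary π r := by
    intro U hU
    obtain ⟨s, hs, rfl⟩ := hFdesc U hU
    constructor
    · have hcompl : 0 < sᶜ.card := by
        rw [Finset.card_compl, hs]
        simp only [Fintype.card_fin]
        omega
      obtain ⟨j, hj'⟩ := Finset.card_pos.mp hcompl
      have hj : j ∉ s := Finset.mem_compl.mp hj'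
      intro hle
      have hbj := hle (Submodule.smul_mem_pointwise_smul (b j) _ ⊤ Submodule.mem_top)
      rw [Module.Basis.mem_span_image] at hbj
      have hsupp : (b.repr (π ^ (r - 1) • b j)).support = {j} := by
        rw [map_smul, Module.Basis.repr_self, Finsupp.smul_single, smul_eq_mul, mul_one,
          Finsupp.support_single_ne_zero _ hπr']
      rw [hsupp] at hbj
      exact hj (hbj (Finset.mem_singleton_self j))
    · obtain ⟨i, hi⟩ := Finset.card_pos.mp (show 0 < s.card by omega)
      intro hle
      have hbi := hle (Submodule.subset_span ⟨i, Finset.mem_coe.mpr hi, rfl⟩)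
      rw [← SetLike.mem_coe, Submodule.coe_pointwise_smul] at hbi
      obtain ⟨y, -, hy⟩ := hbi
      have h1 : π * b.repr y i = 1 := by
        have h2 := congrArg (fun z => b.repr z i) hy
        simpa [Module.Basis.repr_self] using h2
      have h0 : (1 : R) = 0 := by
        calc (1 : R) = (π * b.repr y i) ^ r := by rw [h1, one_pow]
          _ = π ^ r * (b.repr y i) ^ r := mul_pow _ _ _
          _ = 0 := by rw [hπr, zero_mul]
      exact one_ne_zero h0
  -- nontriviality
  have hNontriv : F.Nontrivial := by
    obtain ⟨s, -, hs⟩ := Finset.exists_subset_card_eq (s := (Finset.univ : Finset (Fin d))) (n := n)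
      (by simpa using hnd')
    obtain ⟨i, hi⟩ := Finset.card_pos.mp (show 0 < s.card by omega)
    have hcompl : 0 < sᶜ.card := by
      rw [Finset.card_compl, hs]
      simp only [Fintype.card_fin]
      omega
    obtain ⟨j, hj'⟩ := Finset.card_pos.mp hcompl
    have hj : j ∉ s := Finset.mem_compl.mp hj'
    set t := insert j (s.erase i) with htdef
    have ht : t.card = n := by
      rw [htdef, Finset.card_insert_of_notMem (fun h => hj (Finset.mem_of_mem_erase h)),
        Finset.card_erase_of_mem hi, hs]
      omega
    refine ⟨_, hmemF t ht, _, hmemF s hs, ?_⟩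
    intro h
    have hts : t = s := hspan_inj h
    apply hj
    rw [← hts, htdef]
    exact Finset.mem_insert_self j _
  -- distances
  have hdist : ∀ U₁ ∈ F, ∀ U₂ ∈ F, U₁ ≠ U₂ → distMod π U₁ U₂ = 2 * r := by
    intro U₁ h₁ U₂ h₂ hne
    obtain ⟨s, hs, rfl⟩ := hFdesc _ h₁
    obtain ⟨t, ht, rfl⟩ := hFdesc _ h₂
    have hst : s ≠ t := fun h => hne (by rw [h])
    have h1 : ∃ j ∈ s, j ∉ t := by
      by_contra hc
      push_neg at hc
      exact hst (Finset.eq_of_subset_of_card_le hc (by omega))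
    have h2 : ∃ k ∈ t, k ∉ s := by
      by_contra hc
      push_neg at hc
      exact hst (Finset.eq_of_subset_of_card_le hc (by omega)).symm
    obtain ⟨j, hjs, hjt⟩ := h1
    obtain ⟨k, hkt, hks⟩ := h2
    rw [distMod,
      nmin_span_eq π b r hpow _ _ (Finset.mem_coe.mpr hjs)
        (fun h => hjt (Finset.mem_coe.mp h)),
      nmin_span_eq π b r hpow _ _ (Finset.mem_coe.mpr hkt)
        (fun h => hks (Finset.mem_coe.mp h))]
    omega
  refine ⟨hbdry, hNontriv, ?_, ?_⟩
  · -- minimum distance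
    have hset : {k : ℕ | ∃ U₁ ∈ F, ∃ U₂ ∈ F, U₁ ≠ U₂ ∧ distMod π U₁ U₂ = k} = {2 * r} := by
      ext k
      simp only [Set.mem_setOf_eq, Set.mem_singleton_iff]
      constructor
      · rintro ⟨U₁, h₁, U₂, h₂, hne, rfl⟩
        exact hdist U₁ h₁ U₂ h₂ hne
      · rintro rfl
        obtain ⟨U₁, h₁, U₂, h₂, hne⟩ := hNontriv
        exact ⟨U₁, h₁, U₂, h₂, hne, hdist U₁ h₁ U₂ h₂ hne⟩
    rw [minDist, hset, csInf_singleton]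
  · -- cardinality
    have hFeq : F = (fun s : Finset (Fin d) => Submodule.span R (b '' ↑s)) ''
        {s : Finset (Fin d) | s.card = n} := by
      ext U
      constructor
      · intro hU
        obtain ⟨s, hs, rfl⟩ := hFdesc U hU
        exact ⟨s, hs, rfl⟩
      · rintro ⟨s, hs, rfl⟩
        exact hmemF s hs
    rw [hFeq, Nat.card_image_of_injective hspan_inj]
    have hsetcard : {s : Finset (Fin d) | s.card = n} =
        ↑(Finset.powersetCard n (Finset.univ : Finset (Fin d))) := by
      ext s
      simp [Finset.mem_powersetCard_univ]
    rw [hsetcard, Nat.card_coe_set_eq, Set.ncard_coe_finset, Finset.card_powersetCard,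
      Finset.card_univ, Fintype.card_fin, Nat.choose_eq_factorial_div_factorial hnd']


end SphericalSubmoduleCodes
end
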